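/- For all n ≥ 1, the number of derangements d_n satisfies d_n = sum over k with 2 ≤ 2k ≤ n-1 of (2k) * (2k+2)(2k+3)...(n) [i.e., the rising product (2k+2)_{n-2k-1} = (2k+2)(2k+3)···(2k+2 + n-2k-2)] + χ(n even). -/

import Mathlib

open Finset

attribute [local instance] Classical.propDecidable

noncomputable section

/-- The word `x_1 x_2 ... x_n` (0-indexed) of a signed permutation of order `n`,
encoded as a pair (permutation, signs): `x_i = ±(σ(i)+1)`. -/
def sword (n : ℕ) (w : Equiv.Perm (Fin n) × (Fin n → Bool)) : ℕ → ℤ :=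
  fun i => if h : i < n then
      (if w.2 ⟨i, h⟩ then -(((w.1 ⟨i, h⟩ : ℕ) : ℤ) + 1) else (((w.1 ⟨i, h⟩ : ℕ) : ℤ) + 1))
    else 0

/-- number of negative letters -/
def negStat (n : ℕ) (x : ℕ → ℤ) : ℕ := ((Finset.range n).filter (fun i => x i < 0)).card

/-- number of positive fixed points (`x_i = i`, 1-indexed) -/
def fixPlus (n : ℕ) (x : ℕ → ℤ) : ℕ :=
  ((Finset.range n).filter (fun i => x i = (i : ℤ) + 1)).card

/-- number of negative fixed points (`x_i = -i`, 1-indexed) -/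
def fixMinus (n : ℕ) (x : ℕ → ℤ) : ℕ :=
  ((Finset.range n).filter (fun i => x i = -((i : ℤ) + 1))).card

/-- major index of the word -/
def majStat (n : ℕ) (x : ℕ → ℤ) : ℕ :=
  ∑ i ∈ Finset.range (n - 1), if x (i + 1) < x i then i + 1 else 0

/-- number of inversions of the word -/
def invStat (n : ℕ) (x : ℕ → ℤ) : ℕ :=
  ((Finset.range n ×ˢ Finset.range n).filter (fun p => p.1 < p.2 ∧ x p.2 < x p.1)).card

/-- length function `ℓ(w) = inv w + ∑_{x_i<0} |x_i|` -/
def lenStat (n : ℕ) (x : ℕ → ℤ) : ℕ :=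
  invStat n x + ∑ i ∈ Finset.range n, if x i < 0 then (x i).natAbs else 0

/-- flag-major index `fmaj = 2 maj + neg` -/
def fmajStat (n : ℕ) (x : ℕ → ℤ) : ℕ := 2 * majStat n x + negStat n x

/-- the word `x_0 ... x_{m-1}` has its leftmost trough at position `2k` (1-indexed):
`x_1 > x_2 > ... > x_{2k}` and `x_{2k} < x_{2k+1}` (with `x_{m+1} = ∞`). -/
def IsDesarAt (m k : ℕ) (x : ℕ → ℤ) : Prop :=
  1 ≤ k ∧ 2 * k ≤ m ∧ (∀ i, i + 1 < 2 * k → x (i + 1) < x i) ∧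
    (2 * k = m ∨ x (2 * k - 1) < x (2 * k))

/-- a word of length `m` is a desarrangement (empty word included) -/
def IsDesar (m : ℕ) (x : ℕ → ℤ) : Prop :=
  m = 0 ∨ ∃ k, IsDesarAt m k x

/-- the length of the longest right factor of the word of length `n`
which is a desarrangement -/
def dlen (n : ℕ) (x : ℕ → ℤ) : ℕ :=
  sSup {m | m ≤ n ∧ IsDesar m (fun i => x (n - m + i))}

/-- number of letters of `w^-` in the pixed factorization `w = w^- w^+ w^d` -/
def pixMinus (n : ℕ) (x : ℕ → ℤ) : ℕ :=
  ((Finset.range (n - dlen n x)).filter (fun i => x i < 0)).card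

/-- number of letters of `w^+` in the pixed factorization `w = w^- w^+ w^d` -/
def pixPlus (n : ℕ) (x : ℕ → ℤ) : ℕ :=
  ((Finset.range (n - dlen n x)).filter (fun i => 0 < x i)).card

/-- the number of derangements of an `m`-element set -/
def dnum (m : ℕ) : ℕ :=
  (Finset.univ.filter (fun σ : Equiv.Perm (Fin m) => ∀ i, σ i ≠ i)).card

/-- the word of an ordinary permutation of `{1, ..., m}` -/
def pword (m : ℕ) (σ : Equiv.Perm (Fin m)) : ℕ → ℤ :=
  fun i => if h : i < m then ((σ ⟨i, h⟩ : ℕ) : ℤ) + 1 else 0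

/-- the q-ascending factorial `(q;q)_m` -/
def qq {K : Type*} [CommRing K] (q : K) (m : ℕ) : K :=
  ∏ i ∈ Finset.range m, (1 - q ^ (i + 1))

/-- `D_m(q)`: generating polynomial for derangements of order `m` by major index -/
def Dmaj {K : Type*} [CommRing K] (q : K) (m : ℕ) : K :=
  ∑ σ ∈ Finset.univ.filter (fun σ : Equiv.Perm (Fin m) => ∀ i, σ i ≠ i),
    q ^ majStat m (pword m σ)


def Sval (n : ℕ) : ℕ :=
  ∑ k ∈ (Finset.range (n + 1)).filter (fun k => 2 ≤ 2 * k ∧ 2 * k ≤ n - 1),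
    (2 * k) * ∏ i ∈ Finset.range (n - 2 * k - 1), (2 * k + 2 + i)

def Fval (n : ℕ) : ℕ := Sval n + (if Even n then 1 else 0)

lemma sval_set (n : ℕ) :
    (Finset.range (n + 1)).filter (fun k => 2 ≤ 2 * k ∧ 2 * k ≤ n - 1)
      = Finset.Icc 1 ((n - 1) / 2) := by
  ext k
  simp only [Finset.mem_filter, Finset.mem_Icc, Finset.mem_range]
  omega

lemma Sval_succ_even {n : ℕ} (hn : Odd n) : Sval (n + 1) = (n + 1) * Sval n := by
  unfold Sval
  rw [sval_set, sval_set]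
  have hb : (n + 1 - 1) / 2 = (n - 1) / 2 := by obtain ⟨m, hm⟩ := hn; omega
  rw [hb, Finset.mul_sum]
  refine Finset.sum_congr rfl ?_
  intro k hk
  simp only [Finset.mem_Icc] at hk
  have h2k : 2 * k + 1 ≤ n := by omega
  have h1 : n + 1 - 2 * k - 1 = (n - 2 * k - 1) + 1 := by omega
  rw [h1, Finset.prod_range_succ]
  have h2 : 2 * k + 2 + (n - 2 * k - 1) = n + 1 := by omega
  rw [h2]; ring

lemma Sval_succ_odd {n : ℕ} (hn : Even n) (h2 : 2 ≤ n) :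
    Sval (n + 1) = (n + 1) * Sval n + n := by
  unfold Sval
  rw [sval_set, sval_set]
  have hb : (n + 1 - 1) / 2 = (n - 1) / 2 + 1 := by obtain ⟨m, hm⟩ := hn; omega
  rw [hb, Finset.sum_Icc_succ_top (by omega : 1 ≤ (n - 1) / 2 + 1)]
  have hk0 : 2 * ((n - 1) / 2 + 1) = n := by omega
  have hlast : n + 1 - 2 * ((n - 1) / 2 + 1) - 1 = 0 := by omega
  rw [hlast, hk0, Finset.prod_range_zero, mul_one, Finset.mul_sum]
  congr 1
  refine Finset.sum_congr rfl ?_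
  intro k hk
  simp only [Finset.mem_Icc] at hk
  have h2k : 2 * k + 1 ≤ n := by omega
  have h1 : n + 1 - 2 * k - 1 = (n - 2 * k - 1) + 1 := by omega
  rw [h1, Finset.prod_range_succ]
  have h3 : 2 * k + 2 + (n - 2 * k - 1) = n + 1 := by omega
  rw [h3]; ring

lemma Fval_one : Fval 1 = 0 := by
  unfold Fval Sval
  rw [sval_set]
  norm_num

lemma Fval_rec {n : ℕ} (hn : 1 ≤ n) :
    (Fval (n + 1) : ℤ) = (n + 1) * (Fval n : ℤ) - (-1) ^ n := by
  rcases Nat.even_or_odd n with he | ho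
  · have h2 : 2 ≤ n := by
      rcases he with ⟨m, hm⟩; omega
    have hodd : ¬ Even (n + 1) := by simp [Nat.even_add_one, he]
    unfold Fval
    rw [Sval_succ_odd he h2, if_neg hodd, if_pos he, he.neg_one_pow]
    push_cast
    ring
  · have heven : Even (n + 1) := Odd.add_one ho
    have hne : ¬ Even n := Nat.not_even_iff_odd.mpr ho
    unfold Fval
    rw [Sval_succ_even ho, if_pos heven, if_neg hne, ho.neg_one_pow]
    push_cast
    ring

lemma numDerangements_eq_Fval : ∀ n, 1 ≤ n → numDerangements n = Fval n := by
  intro n hn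
  induction n, hn using Nat.le_induction with
  | base => rw [Fval_one, numDerangements_one]
  | succ n hn ih =>
    have h1 := numDerangements_succ n
    have h2 := Fval_rec hn
    have : (numDerangements (n + 1) : ℤ) = (Fval (n + 1) : ℤ) := by
      rw [h1, h2, ih]
    exact_mod_cast this

lemma dnum_eq (m : ℕ) : dnum m = numDerangements m := by
  rw [← card_derangements_fin_eq_numDerangements, ← Set.toFinset_card]
  unfold dnum
  congr 1
  ext σ
  simp only [Finset.mem_filter, Finset.mem_univ, true_and]
  rw [Set.mem_toFinset]
  simp [derangements]

theorem stmt18 (n : ℕ) (hn : 1 ≤ n) :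
    dnum n
      = (∑ k ∈ (Finset.range (n + 1)).filter (fun k => 2 ≤ 2 * k ∧ 2 * k ≤ n - 1),
          (2 * k) * ∏ i ∈ Finset.range (n - 2 * k - 1), (2 * k + 2 + i))
        + (if Even n then 1 else 0) := by
  exact (dnum_eq n).trans (numDerangements_eq_Fval n hn)
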